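/- Let D be a positive integer, r ∈ ℤ, and μ ∈ {1/2, 1/6}. For all integers a, b, c, d with ad − bc = 1, a ≡ d ≡ 1 (mod 18D²) and b ≡ c ≡ 0 (mod 18D²), and every z ∈ ℂ with Im z > 0: θ_{r,μ}((az+b)/(cz+d)) · θ₀(z) = θ_{r,μ}(z) · θ₀((az+b)/(cz+d)). (Equivalently, the ratio f_{r,μ} = θ_{r,μ}/θ₀ is a modular function invariant under the principal congruence subgroup Γ(18D²).) -/

import Mathlib

open Complex

/-- For a fixed positive integer `D`, `r ∈ ℤ`, `μ ∈ ℝ`: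
`θ_{r,μ}(z) = ∑_{n∈ℤ} (−1)ⁿ exp(πi(n + r/D − μ)²z)`. -/
noncomputable def thetaRMu (D : ℕ) (r : ℤ) (μ : ℝ) (z : ℂ) : ℂ :=
  ∑' n : ℤ, (-1 : ℂ) ^ n *
    Complex.exp (Real.pi * Complex.I * ((n : ℂ) + (r : ℂ) / (D : ℂ) - (μ : ℂ)) ^ 2 * z)

/-- `θ₀(z) = ∑_{n∈ℤ} (−1)ⁿ exp(πi(n − 1/6)²z)`. -/
noncomputable def theta0 (z : ℂ) : ℂ :=
  ∑' n : ℤ, (-1 : ℂ) ^ n * Complex.exp (Real.pi * Complex.I * ((n : ℂ) - 1/6) ^ 2 * z)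

open Real

noncomputable def Th (p q : ℝ) (τ : ℂ) : ℂ :=
  ∑' n : ℤ, Complex.exp (↑Real.pi * I * ((n : ℂ) + (p : ℂ)) ^ 2 * τ + 2 * ↑Real.pi * I * (n : ℂ) * (q : ℂ))

lemma Th_eq_jacobi (p q : ℝ) (τ : ℂ) :
    Th p q τ = cexp (↑Real.pi * I * (p:ℂ)^2 * τ) * jacobiTheta₂ ((p:ℂ) * τ + q) τ := by
  rw [jacobiTheta₂, ← tsum_mul_left]
  refine tsum_congr fun n => ?_
  rw [jacobiTheta₂_term, ← Complex.exp_add]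
  congr 1
  ring

lemma Th_q_add_int (p q : ℝ) (n : ℤ) (τ : ℂ) : Th p (q + n) τ = Th p q τ := by
  refine tsum_congr fun m => ?_
  push_cast
  rw [show ↑Real.pi * I * ((m : ℂ) + p) ^ 2 * τ + 2 * ↑Real.pi * I * m * (q + n)
      = (↑Real.pi * I * ((m : ℂ) + p) ^ 2 * τ + 2 * ↑Real.pi * I * m * q) + (m * n : ℤ) * (2 * ↑Real.pi * I) by push_cast; ring,
    Complex.exp_add, Complex.exp_int_mul_two_pi_mul_I, mul_one]

lemma Th_p_add_int (p q : ℝ) (n : ℤ) (τ : ℂ) :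
    Th (p + n) q τ = cexp (-(2 * ↑Real.pi * I * n * q)) * Th p q τ := by
  rw [Th, Th, ← tsum_mul_left, ← (Equiv.subRight n).tsum_eq]
  refine tsum_congr fun m => ?_
  simp only [Equiv.subRight_apply]
  rw [← Complex.exp_add]
  congr 1
  push_cast
  ring

lemma Th_neg (p q : ℝ) (τ : ℂ) : Th (-p) (-q) τ = Th p q τ := by
  rw [Th, Th, ← (Equiv.neg ℤ).tsum_eq]
  refine tsum_congr fun m => ?_
  simp only [Equiv.neg_apply]
  congr 1
  push_cast
  ring

lemma Th_T (p q : ℝ) (k : ℤ) (τ : ℂ) :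
    Th p q (τ + k) = cexp (↑Real.pi * I * k * (p:ℂ)^2) * Th p (q + k*p + k/2) τ := by
  rw [Th, Th, ← tsum_mul_left]
  refine tsum_congr fun n => ?_
  obtain ⟨m, hm⟩ := Int.even_mul_succ_self (n-1)
  have hm2 : n * (n-1) = 2*m := by linear_combination hm
  have hm' : (n : ℂ) * ((n:ℂ) - 1) = 2 * (m:ℂ) := by exact_mod_cast congrArg (Int.cast : ℤ → ℂ) hm2
  rw [← Complex.exp_add,
    show ↑Real.pi * I * ((n : ℂ) + p) ^ 2 * (τ + k) + 2 * ↑Real.pi * I * n * q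
      = (↑Real.pi * I * (k:ℂ) * (p:ℂ)^2 + (↑Real.pi * I * ((n : ℂ) + p) ^ 2 * τ +
          2 * ↑Real.pi * I * n * ((q:ℂ) + (k:ℂ)*(p:ℂ) + (k:ℂ)/2))) + (k*m : ℤ) * (2 * ↑Real.pi * I) by
        push_cast; linear_combination (↑Real.pi * I * (k:ℂ)) * hm',
    Complex.exp_add, Complex.exp_int_mul_two_pi_mul_I, mul_one]
  push_cast
  ring_nf

lemma Th_S (p q : ℝ) (τ : ℂ) (hτ : 0 < τ.im) :
    Th p q (-1/τ) = (-I*τ)^(1/2 : ℂ) * cexp (-(2 * ↑Real.pi * I * p * q)) * Th q (-p) τ := by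
  have hτ0 : τ ≠ 0 := fun h => by simp [h] at hτ
  have hne : (-I*τ) ≠ 0 := by
    simp only [ne_eq, mul_eq_zero, neg_eq_zero, I_ne_zero, false_or]; exact hτ0
  have hpow : (-I*τ)^(1/2 : ℂ) ≠ 0 := by
    rw [ne_eq, Complex.cpow_eq_zero_iff]
    tauto
  have FE := jacobiTheta₂_functional_equation ((q:ℂ)*τ - p) τ
  have harg : ((q:ℂ)*τ - p) / τ = (p:ℂ) * (-1/τ) + q := by field_simp; ring
  rw [harg] at FE
  -- FE : jacobiTheta₂ (qτ - p) τ = 1/(-I*τ)^(1/2) * cexp(-π I (qτ-p)^2/τ) * jacobiTheta₂ (p*(-1/τ)+q) (-1/τ)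
  have FE' : jacobiTheta₂ ((p:ℂ) * (-1/τ) + q) (-1/τ)
      = (-I*τ)^(1/2 : ℂ) * cexp (↑Real.pi * I * ((q:ℂ)*τ - p)^2 / τ) * jacobiTheta₂ ((q:ℂ)*τ - p) τ := by
    rw [FE]
    rw [show (-(Real.pi:ℂ)) * I * ((q:ℂ)*τ - p)^2 / τ = -(↑Real.pi * I * ((q:ℂ)*τ - p)^2 / τ) by ring]
    rw [Complex.exp_neg]
    field_simp
  rw [Th_eq_jacobi, Th_eq_jacobi, FE']
  rw [show ((-p : ℝ) : ℂ) = -(p:ℂ) by push_cast; ring]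
  rw [show (q:ℂ) * τ + -(p:ℂ) = (q:ℂ)*τ - p by ring]
  have key : cexp (↑Real.pi * I * (p:ℂ) ^ 2 * (-1 / τ)) * cexp (↑Real.pi * I * ((q:ℂ) * τ - p) ^ 2 / τ)
      = cexp (-(2 * ↑Real.pi * I * (p:ℂ) * q)) * cexp (↑Real.pi * I * (q:ℂ) ^ 2 * τ) := by
    rw [← Complex.exp_add, ← Complex.exp_add]
    congr 1
    field_simp
    ring
  linear_combination ((-I*τ)^(1/2 : ℂ) * jacobiTheta₂ ((q:ℂ) * τ - p) τ) * key

lemma denom_ne_zero (c d : ℤ) (hcd : ¬(c = 0 ∧ d = 0)) (τ : ℂ) (hτ : 0 < τ.im) :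
    (c:ℂ) * τ + d ≠ 0 := by
  intro h
  rcases eq_or_ne c 0 with hc | hc
  · subst hc
    simp only [Int.cast_zero, zero_mul, zero_add, Int.cast_eq_zero] at h
    exact hcd ⟨rfl, h⟩
  · have him := congrArg Complex.im h
    simp only [Complex.add_im, Complex.mul_im, Complex.intCast_im, Complex.intCast_re,
      Complex.zero_im, zero_mul, add_zero, mul_zero] at him
    have : (c:ℝ) ≠ 0 := Int.cast_ne_zero.mpr hc
    have := mul_ne_zero this (ne_of_gt hτ)
    simp only [him] at this
    exact this rfl

lemma mobius_im_pos (a b c d : ℤ) (h : a * d - b * c = 1) (τ : ℂ) (hτ : 0 < τ.im) :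
    0 < (((a:ℂ) * τ + b) / ((c:ℂ) * τ + d)).im := by
  have hcd : ¬(c = 0 ∧ d = 0) := by rintro ⟨rfl, rfl⟩; simp at h
  have hne := denom_ne_zero c d hcd τ hτ
  have hns : 0 < Complex.normSq ((c:ℂ) * τ + d) := Complex.normSq_pos.mpr hne
  rw [Complex.div_im]
  have hre : (((a:ℂ) * τ + b)).re = (a:ℝ) * τ.re + b := by simp
  have him : (((a:ℂ) * τ + b)).im = (a:ℝ) * τ.im := by simp
  have hre' : (((c:ℂ) * τ + d)).re = (c:ℝ) * τ.re + d := by simp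
  have him' : (((c:ℂ) * τ + d)).im = (c:ℝ) * τ.im := by simp
  rw [hre, him, hre', him']
  have hdet : (a:ℝ) * d - b * c = 1 := by exact_mod_cast congrArg (Int.cast : ℤ → ℝ) h
  have : (a:ℝ) * τ.im * ((c:ℝ) * τ.re + d) / Complex.normSq ((c:ℂ) * τ + d)
      - ((a:ℝ) * τ.re + b) * ((c:ℝ) * τ.im) / Complex.normSq ((c:ℂ) * τ + d)
      = τ.im / Complex.normSq ((c:ℂ) * τ + d) := by
    rw [div_sub_div_same]
    congr 1
    linear_combination τ.im * hdet
  rw [this]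
  positivity

/-- The abstract theta transformation property for an integer matrix. -/
def TransProp (a b c d : ℤ) : Prop :=
  ∃ u : ℂ → ℂ, ∃ m₂ : ℤ, ∀ (p q : ℝ) (τ : ℂ), 0 < τ.im →
    Th p q (((a:ℂ) * τ + b) / ((c:ℂ) * τ + d)) =
      u τ * cexp (↑Real.pi * I * ((a:ℂ)*(b:ℂ)*(p:ℂ)^2 + 2*(b:ℂ)*(c:ℂ)*(p:ℂ)*(q:ℂ)
          + (c:ℂ)*(d:ℂ)*(q:ℂ)^2 + (a:ℂ)*(b:ℂ)*(c:ℂ)*(p:ℂ) + (a:ℂ)*(c:ℂ)*(d:ℂ)*(q:ℂ))) *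
      Th ((a:ℝ)*p + (c:ℝ)*q + (a:ℝ)*(c:ℝ)/2) ((b:ℝ)*p + (d:ℝ)*q + (b:ℝ)*(d:ℝ)/2 + (m₂:ℝ)) τ

theorem transProp_aux : ∀ (n : ℕ) (a b c d : ℤ), c.natAbs = n → a * d - b * c = 1 →
    TransProp a b c d := by
  intro n
  induction n using Nat.strong_induction_on with
  | _ n IH =>
  intro a b c d hn h
  rcases eq_or_ne c 0 with rfl | hc
  · -- base case c = 0
    have had : a * d = 1 := by linarith
    rcases Int.mul_eq_one_iff_eq_one_or_neg_one.mp had with ⟨rfl, rfl⟩ | ⟨rfl, rfl⟩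
    · refine ⟨fun _ => 1, 0, fun p q τ hτ => ?_⟩
      have harg : (((1:ℤ):ℂ) * τ + b) / (((0:ℤ):ℂ) * τ + ((1:ℤ):ℂ)) = τ + (b:ℂ) := by
        push_cast; field_simp; ring
      rw [harg, Th_T p q b τ, one_mul]
      rw [show (((1:ℤ):ℝ)*p + ((0:ℤ):ℝ)*q + ((1:ℤ):ℝ)*((0:ℤ):ℝ)/2) = p by push_cast; ring,
        show (((b:ℤ):ℝ)*p + ((1:ℤ):ℝ)*q + ((b:ℤ):ℝ)*((1:ℤ):ℝ)/2 + ((0:ℤ):ℝ))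
          = q + (b:ℝ)*p + (b:ℝ)/2 by push_cast; ring]
      congr 2
      push_cast; ring
    · refine ⟨fun _ => 1, b, fun p q τ hτ => ?_⟩
      have harg : (((-1:ℤ):ℂ) * τ + b) / (((0:ℤ):ℂ) * τ + ((-1:ℤ):ℂ)) = τ + ((-b : ℤ):ℂ) := by
        push_cast; field_simp; ring
      rw [harg, Th_T p q (-b) τ, one_mul]
      have hneg : Th (((-1:ℤ):ℝ)*p + ((0:ℤ):ℝ)*q + ((-1:ℤ):ℝ)*((0:ℤ):ℝ)/2)
          (((b:ℤ):ℝ)*p + ((-1:ℤ):ℝ)*q + ((b:ℤ):ℝ)*((-1:ℤ):ℝ)/2 + ((b:ℤ):ℝ)) τ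
          = Th p (q + (-b:ℤ)*p + (-b:ℤ)/2) τ := by
        rw [show (((-1:ℤ):ℝ)*p + ((0:ℤ):ℝ)*q + ((-1:ℤ):ℝ)*((0:ℤ):ℝ)/2) = -p by push_cast; ring,
          show (((b:ℤ):ℝ)*p + ((-1:ℤ):ℝ)*q + ((b:ℤ):ℝ)*((-1:ℤ):ℝ)/2 + ((b:ℤ):ℝ))
            = -(q + (-b:ℤ)*p + (-b:ℤ)/2) by push_cast; ring]
        exact Th_neg _ _ τ
      rw [hneg]
      congr 2
      push_cast; ring
  · -- inductive step, c ≠ 0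
    set k := a / c with hk
    have hdiv : c * k + a % c = a := Int.mul_ediv_add_emod a c
    have hρ0 : 0 ≤ a % c := Int.emod_nonneg a hc
    have hρlt : a % c < |c| := Int.emod_lt_abs a hc
    have hKey : k * c - a = -(a % c) := by linarith [hdiv]
    have hlt : (k * c - a).natAbs < n := by
      rw [hKey, Int.natAbs_neg, ← hn]
      calc (a % c).natAbs < |c|.natAbs := Int.natAbs_lt_natAbs_of_nonneg_of_lt hρ0 hρlt
        _ = c.natAbs := by rw [Int.natAbs_abs]
    have det' : c * (k * d - b) - d * (k * c - a) = 1 := by linear_combination h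
    obtain ⟨u', m₂', H'⟩ := IH _ hlt c d (k * c - a) (k * d - b) rfl det'
    obtain ⟨C2, hC2⟩ := Int.even_mul_succ_self c
    obtain ⟨D2, hD2⟩ := Int.even_mul_succ_self d
    set j : ℤ := k * C2 - a * c with hj
    set m₂ : ℤ := m₂' + k * D2 - b * d with hm₂
    refine ⟨fun τ => (-I * (((c:ℂ) * τ + (d:ℂ)) / (((k*c - a : ℤ):ℂ) * τ + ((k*d - b : ℤ):ℂ))))^(1/2 : ℂ)
        * u' τ * cexp (↑Real.pi * I *
          ((c:ℂ)*k/2 - (c:ℂ)*k*m₂' + (c:ℂ)*d*k - (c:ℂ)*d*k^2/4 - (c:ℂ)*(d:ℂ)^2*(k:ℂ)^2/2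
            - (c:ℂ)^2*k*m₂' - (c:ℂ)^2*(d:ℂ)^2*(k:ℂ)^2/2 - (b:ℂ)*c + (b:ℂ)*c*d*k/2
            + (b:ℂ)*(c:ℂ)^2*k/2 + 3*(b:ℂ)*(c:ℂ)^2*d*k/2 - (b:ℂ)^2*(c:ℂ)^2 + 2*(a:ℂ)*c*m₂')),
      m₂, fun p q τ hτ => ?_⟩
    have hcd : ¬(c = 0 ∧ d = 0) := fun ⟨h1, _⟩ => hc h1
    have hcd' : ¬(k*c - a = 0 ∧ k*d - b = 0) := by
      rintro ⟨h1, h2⟩; rw [h1, h2] at det'; simp at det'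
    have hden1 : (c:ℂ) * τ + d ≠ 0 := denom_ne_zero c d hcd τ hτ
    have hden2 : ((k*c - a : ℤ):ℂ) * τ + ((k*d - b : ℤ):ℂ) ≠ 0 := denom_ne_zero _ _ hcd' τ hτ
    set w : ℂ := ((c:ℂ) * τ + (d:ℂ)) / (((k*c - a : ℤ):ℂ) * τ + ((k*d - b : ℤ):ℂ)) with hw
    have hwim : 0 < w.im := mobius_im_pos c d (k*c-a) (k*d-b) det' τ hτ
    have hwne : w ≠ 0 := div_ne_zero hden1 hden2
    have hM : ((a:ℂ) * τ + b) / ((c:ℂ) * τ + d) = -1/w + (k:ℂ) := by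
      rw [hw]
      rw [neg_div, one_div_div, eq_comm, neg_add_eq_sub, sub_eq_iff_eq_add, ← add_div, eq_div_iff hden1]
      push_cast
      ring
    rw [hM, Th_T p q k (-1/w), Th_S p (q + (k:ℝ)*p + (k:ℝ)/2) w hwim, H' (q + (k:ℝ)*p + (k:ℝ)/2) (-p) τ hτ]
    have hC2ℝ : (c:ℝ) * ((c:ℝ) + 1) = (C2:ℝ) + (C2:ℝ) := by exact_mod_cast congrArg (Int.cast : ℤ → ℝ) hC2
    have hD2ℝ : (d:ℝ) * ((d:ℝ) + 1) = (D2:ℝ) + (D2:ℝ) := by exact_mod_cast congrArg (Int.cast : ℤ → ℝ) hD2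
    have hX : ((c:ℝ)*(q + (k:ℝ)*p + (k:ℝ)/2) + ((k*c - a : ℤ):ℝ)*(-p) + (c:ℝ)*((k*c - a : ℤ):ℝ)/2)
        = ((a:ℝ)*p + (c:ℝ)*q + (a:ℝ)*(c:ℝ)/2) + (j:ℝ) := by
      rw [hj]; push_cast
      linear_combination ((k:ℝ)/2) * hC2ℝ
    have hY : ((d:ℝ)*(q + (k:ℝ)*p + (k:ℝ)/2) + ((k*d - b : ℤ):ℝ)*(-p) + (d:ℝ)*((k*d - b : ℤ):ℝ)/2 + (m₂':ℝ))
        = ((b:ℝ)*p + (d:ℝ)*q + (b:ℝ)*(d:ℝ)/2 + (m₂:ℝ)) := by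
      rw [hm₂]; push_cast
      linear_combination ((k:ℝ)/2) * hD2ℝ
    rw [hX, hY, Th_p_add_int]
    have hdetC : (a:ℂ) * d - b * c = 1 := by exact_mod_cast congrArg (Int.cast : ℤ → ℂ) h
    have hC2C : (C2:ℂ) = ((c:ℂ)^2 + c)/2 := by
      have := congrArg (Int.cast : ℤ → ℂ) hC2; push_cast at this; linear_combination (-1/2 : ℂ) * this
    have hD2C : (D2:ℂ) = ((d:ℂ)^2 + d)/2 := by
      have := congrArg (Int.cast : ℤ → ℂ) hD2; push_cast at this; linear_combination (-1/2 : ℂ) * this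
    have hexp : cexp (↑Real.pi * I * (k:ℂ) * (p:ℂ)^2)
        * cexp (-(2 * ↑Real.pi * I * (p:ℂ) * ((q + (k:ℝ)*p + (k:ℝ)/2 : ℝ) : ℂ)))
        * cexp (↑Real.pi * I * ((c:ℂ)*(d:ℂ)*(((q + (k:ℝ)*p + (k:ℝ)/2 : ℝ)):ℂ)^2
            + 2*(d:ℂ)*((k*c - a:ℤ):ℂ)*(((q + (k:ℝ)*p + (k:ℝ)/2 : ℝ)):ℂ)*(((-p : ℝ)):ℂ)
            + ((k*c - a:ℤ):ℂ)*((k*d - b:ℤ):ℂ)*(((-p : ℝ)):ℂ)^2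
            + (c:ℂ)*(d:ℂ)*((k*c - a:ℤ):ℂ)*(((q + (k:ℝ)*p + (k:ℝ)/2 : ℝ)):ℂ)
            + (c:ℂ)*((k*c - a:ℤ):ℂ)*((k*d - b:ℤ):ℂ)*(((-p : ℝ)):ℂ)))
        * cexp (-(2 * ↑Real.pi * I * (j:ℂ) * (((b:ℝ)*p + (d:ℝ)*q + (b:ℝ)*(d:ℝ)/2 + (m₂:ℝ) : ℝ):ℂ)))
        = cexp (↑Real.pi * I *
          ((c:ℂ)*k/2 - (c:ℂ)*k*m₂' + (c:ℂ)*d*k - (c:ℂ)*d*k^2/4 - (c:ℂ)*(d:ℂ)^2*(k:ℂ)^2/2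
            - (c:ℂ)^2*k*m₂' - (c:ℂ)^2*(d:ℂ)^2*(k:ℂ)^2/2 - (b:ℂ)*c + (b:ℂ)*c*d*k/2
            + (b:ℂ)*(c:ℂ)^2*k/2 + 3*(b:ℂ)*(c:ℂ)^2*d*k/2 - (b:ℂ)^2*(c:ℂ)^2 + 2*(a:ℂ)*c*m₂'))
        * cexp (↑Real.pi * I * ((a:ℂ)*(b:ℂ)*(p:ℂ)^2 + 2*(b:ℂ)*(c:ℂ)*(p:ℂ)*(q:ℂ)
          + (c:ℂ)*(d:ℂ)*(q:ℂ)^2 + (a:ℂ)*(b:ℂ)*(c:ℂ)*(p:ℂ) + (a:ℂ)*(c:ℂ)*(d:ℂ)*(q:ℂ))) := by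
      rw [← Complex.exp_add, ← Complex.exp_add, ← Complex.exp_add, ← Complex.exp_add]
      congr 1
      rw [hj, hm₂]
      push_cast
      rw [hC2C, hD2C]
      linear_combination (↑Real.pi * I * (2*(p:ℂ)*q + (k:ℂ)*p + (k:ℂ)*(p:ℂ)^2
        + (c:ℂ)*k/2 + (c:ℂ)*d*k - (b:ℂ)*c)) * hdetC
    linear_combination ((-I*w)^(1/2:ℂ) * u' τ
      * Th ((a:ℝ)*p + (c:ℝ)*q + (a:ℝ)*(c:ℝ)/2) ((b:ℝ)*p + (d:ℝ)*q + (b:ℝ)*(d:ℝ)/2 + (m₂:ℝ)) τ) * hexp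

lemma exp_half_int (n : ℤ) : cexp (2 * ↑Real.pi * I * (n:ℂ) * ((1/2 : ℝ):ℂ)) = (-1 : ℂ) ^ n := by
  rw [show 2 * (Real.pi:ℂ) * I * (n:ℂ) * ((1/2 : ℝ):ℂ) = (n:ℂ) * ((Real.pi:ℂ) * I) by
    push_cast; ring]
  rw [Complex.exp_int_mul, Complex.exp_pi_mul_I]

lemma thetaRMu_eq_Th (D : ℕ) (r : ℤ) (μ : ℝ) (z : ℂ) :
    thetaRMu D r μ z = Th ((r:ℝ)/(D:ℝ) - μ) (1/2) z := by
  refine tsum_congr fun n => ?_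
  rw [Complex.exp_add, exp_half_int, mul_comm]
  congr 2
  push_cast
  ring

lemma theta0_eq_Th (z : ℂ) : theta0 z = Th (-(1/6)) (1/2) z := by
  refine tsum_congr fun n => ?_
  rw [Complex.exp_add, exp_half_int, mul_comm]
  congr 2
  push_cast
  ring

lemma combine (u T1 T0 T1' T0' : ℂ) (s₁ s₀ : ℝ) (W : ℤ) (hW : s₁ = s₀ + 2*(W:ℝ))
    (h1 : T1' = u * cexp (↑Real.pi * I * ((s₁ : ℝ):ℂ)) * T1)
    (h0 : T0' = u * cexp (↑Real.pi * I * ((s₀ : ℝ):ℂ)) * T0) :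
    T1' * T0 = T1 * T0' := by
  have hs : ((s₁ : ℝ):ℂ) = ((s₀ : ℝ):ℂ) + 2*(W:ℂ) := by rw [hW]; push_cast; ring
  have : cexp (↑Real.pi * I * ((s₁ : ℝ):ℂ)) = cexp (↑Real.pi * I * ((s₀ : ℝ):ℂ)) := by
    rw [hs, show ↑Real.pi * I * (((s₀ : ℝ):ℂ) + 2*(W:ℂ))
      = ↑Real.pi * I * ((s₀ : ℝ):ℂ) + (W:ℂ) * (2 * ↑Real.pi * I) by ring,
      Complex.exp_add, Complex.exp_int_mul_two_pi_mul_I, mul_one]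
  rw [h1, h0, this]
  ring

set_option maxHeartbeats 3200000

/-- The ratio `f_{r,μ} = θ_{r,μ}/θ₀` is invariant under the principal congruence
subgroup `Γ(18D²)`, stated without division: for `(a b; c d) ∈ SL₂(ℤ)` with
`a ≡ d ≡ 1` and `b ≡ c ≡ 0` modulo `18D²`,
`θ_{r,μ}(γz) θ₀(z) = θ_{r,μ}(z) θ₀(γz)`. -/
theorem thetaRMu_ratio_Gamma_invariant (D : ℕ) (hD : 0 < D) (r : ℤ) (μ : ℝ)
    (hμ : μ = 1/2 ∨ μ = 1/6) (a b c d : ℤ) (hdet : a * d - b * c = 1)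
    (ha : (18 * (D : ℤ) ^ 2) ∣ (a - 1)) (hd : (18 * (D : ℤ) ^ 2) ∣ (d - 1))
    (hb : (18 * (D : ℤ) ^ 2) ∣ b) (hc : (18 * (D : ℤ) ^ 2) ∣ c)
    (z : ℂ) (hz : 0 < z.im) :
    thetaRMu D r μ (((a : ℂ) * z + (b : ℂ)) / ((c : ℂ) * z + (d : ℂ))) * theta0 z
      = thetaRMu D r μ z * theta0 (((a : ℂ) * z + (b : ℂ)) / ((c : ℂ) * z + (d : ℂ))) := by
  obtain ⟨a₁, ha₁⟩ := ha
  obtain ⟨d₁, hd₁⟩ := hd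
  obtain ⟨b₁, hb₁⟩ := hb
  obtain ⟨c₁, hc₁⟩ := hc
  have hDℝ : (D:ℝ) ≠ 0 := Nat.cast_ne_zero.mpr hD.ne'
  obtain ⟨u, m₂, H⟩ := transProp_aux c.natAbs a b c d rfl hdet
  have red : ∀ (p : ℝ) (K₁ K₂ : ℤ),
      (a:ℝ)*p + (c:ℝ)*(1/2) + (a:ℝ)*(c:ℝ)/2 = p + (K₁:ℝ) →
      (b:ℝ)*p + (d:ℝ)*(1/2) + (b:ℝ)*(d:ℝ)/2 + (m₂:ℝ) = 1/2 + (K₂:ℝ) →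
      Th p (1/2) (((a:ℂ) * z + b) / ((c:ℂ) * z + d)) = u z *
        cexp (↑Real.pi * I * ((((a:ℝ)*b*p^2 + (b:ℝ)*c*p + (c:ℝ)*d/4 + (a:ℝ)*b*c*p + (a:ℝ)*c*d/2
            - 2*(K₁:ℝ)*(1/2 + (K₂:ℝ)) : ℝ)):ℂ)) * Th p (1/2) z := by
    intro p K₁ K₂ h₁ h₂
    rw [H p (1/2) z hz, h₁, h₂, Th_p_add_int p (1/2 + (K₂:ℝ)) K₁ z,
      Th_q_add_int p (1/2) K₂ z]
    have : cexp (↑Real.pi * I * ((a:ℂ)*(b:ℂ)*(p:ℂ)^2 + 2*(b:ℂ)*(c:ℂ)*(p:ℂ)*((1/2:ℝ):ℂ)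
          + (c:ℂ)*(d:ℂ)*((1/2:ℝ):ℂ)^2 + (a:ℂ)*(b:ℂ)*(c:ℂ)*(p:ℂ) + (a:ℂ)*(c:ℂ)*(d:ℂ)*((1/2:ℝ):ℂ)))
        * cexp (-(2 * ↑Real.pi * I * (K₁:ℂ) * ((1/2 + (K₂:ℝ) : ℝ):ℂ)))
        = cexp (↑Real.pi * I * ((((a:ℝ)*b*p^2 + (b:ℝ)*c*p + (c:ℝ)*d/4 + (a:ℝ)*b*c*p + (a:ℝ)*c*d/2
            - 2*(K₁:ℝ)*(1/2 + (K₂:ℝ)) : ℝ)):ℂ)) := by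
      rw [← Complex.exp_add]
      congr 1
      push_cast
      ring
    calc u z * cexp (↑Real.pi * I * ((a:ℂ)*(b:ℂ)*(p:ℂ)^2 + 2*(b:ℂ)*(c:ℂ)*(p:ℂ)*((1/2:ℝ):ℂ)
          + (c:ℂ)*(d:ℂ)*((1/2:ℝ):ℂ)^2 + (a:ℂ)*(b:ℂ)*(c:ℂ)*(p:ℂ) + (a:ℂ)*(c:ℂ)*(d:ℂ)*((1/2:ℝ):ℂ)))
        * (cexp (-(2 * ↑Real.pi * I * (K₁:ℂ) * ((1/2 + (K₂:ℝ) : ℝ):ℂ))) * Th p (1/2) z)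
        = u z * (cexp (↑Real.pi * I * ((a:ℂ)*(b:ℂ)*(p:ℂ)^2 + 2*(b:ℂ)*(c:ℂ)*(p:ℂ)*((1/2:ℝ):ℂ)
          + (c:ℂ)*(d:ℂ)*((1/2:ℝ):ℂ)^2 + (a:ℂ)*(b:ℂ)*(c:ℂ)*(p:ℂ) + (a:ℂ)*(c:ℂ)*(d:ℂ)*((1/2:ℝ):ℂ)))
          * cexp (-(2 * ↑Real.pi * I * (K₁:ℂ) * ((1/2 + (K₂:ℝ) : ℝ):ℂ)))) * Th p (1/2) z := by ring
      _ = _ := by rw [this]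
  have haℝ : (a:ℝ) = 1 + 18*(D:ℝ)^2*(a₁:ℝ) := by
    have := congrArg (Int.cast : ℤ → ℝ) ha₁; push_cast at this; linarith
  have hbℝ : (b:ℝ) = 18*(D:ℝ)^2*(b₁:ℝ) := by
    have := congrArg (Int.cast : ℤ → ℝ) hb₁; push_cast at this; linarith
  have hcℝ : (c:ℝ) = 18*(D:ℝ)^2*(c₁:ℝ) := by
    have := congrArg (Int.cast : ℤ → ℝ) hc₁; push_cast at this; linarith
  have hdℝ : (d:ℝ) = 1 + 18*(D:ℝ)^2*(d₁:ℝ) := by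
    have := congrArg (Int.cast : ℤ → ℝ) hd₁; push_cast at this; linarith
  rcases hμ with rfl | rfl
  · -- μ = 1/2 : g = 6r - 3D, g1 = 3r - 2D, g2 = 3r - D
    simp only [thetaRMu_eq_Th, theta0_eq_Th]
    refine combine (u z) _ _ _ _ _ _
      (b₁*(3*r - 2*(D:ℤ))*(3*r - (D:ℤ))*(2 - a) - 3*(D:ℤ)*a₁*(3*r - (D:ℤ))*(d + b*d + 2*m₂))
      ?_
      (red ((r:ℝ)/(D:ℝ) - 1/2)
        (a₁*(18*(D:ℤ)*r - 9*(D:ℤ)^2) + 18*(D:ℤ)^2*c₁ + 162*(D:ℤ)^4*a₁*c₁)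
        (b₁*(18*(D:ℤ)*r - 9*(D:ℤ)^2) + 9*(D:ℤ)^2*d₁ + 9*(D:ℤ)^2*b₁ + 162*(D:ℤ)^4*b₁*d₁ + m₂)
        (by rw [haℝ, hcℝ]; push_cast; field_simp; ring)
        (by rw [hbℝ, hdℝ]; push_cast; field_simp; ring))
      (red (-(1/6))
        (-3*(D:ℤ)^2*a₁ + 18*(D:ℤ)^2*c₁ + 162*(D:ℤ)^4*a₁*c₁)
        (-3*(D:ℤ)^2*b₁ + 9*(D:ℤ)^2*d₁ + 9*(D:ℤ)^2*b₁ + 162*(D:ℤ)^4*b₁*d₁ + m₂)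
        (by rw [haℝ, hcℝ]; push_cast; ring)
        (by rw [hbℝ, hdℝ]; push_cast; ring))
    push_cast
    rw [haℝ, hbℝ, hcℝ, hdℝ]
    field_simp
    ring
  · -- μ = 1/6 : g = 6r - D, g1 = 3r - D, g2 = 3r
    simp only [thetaRMu_eq_Th, theta0_eq_Th]
    refine combine (u z) _ _ _ _ _ _
      (b₁*(3*r - (D:ℤ))*(3*r)*(2 - a) - 3*(D:ℤ)*a₁*(3*r)*(d + b*d + 2*m₂))
      ?_
      (red ((r:ℝ)/(D:ℝ) - 1/6)
        (a₁*(18*(D:ℤ)*r - 3*(D:ℤ)^2) + 18*(D:ℤ)^2*c₁ + 162*(D:ℤ)^4*a₁*c₁)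
        (b₁*(18*(D:ℤ)*r - 3*(D:ℤ)^2) + 9*(D:ℤ)^2*d₁ + 9*(D:ℤ)^2*b₁ + 162*(D:ℤ)^4*b₁*d₁ + m₂)
        (by rw [haℝ, hcℝ]; push_cast; field_simp; ring)
        (by rw [hbℝ, hdℝ]; push_cast; field_simp; ring))
      (red (-(1/6))
        (-3*(D:ℤ)^2*a₁ + 18*(D:ℤ)^2*c₁ + 162*(D:ℤ)^4*a₁*c₁)
        (-3*(D:ℤ)^2*b₁ + 9*(D:ℤ)^2*d₁ + 9*(D:ℤ)^2*b₁ + 162*(D:ℤ)^4*b₁*d₁ + m₂)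
        (by rw [haℝ, hcℝ]; push_cast; ring)
        (by rw [hbℝ, hdℝ]; push_cast; ring))
    push_cast
    rw [haℝ, hbℝ, hcℝ, hdℝ]
    field_simp
    ring
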